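/- The Laurent-type C_q[SL_2]-module M(γ,η) (with basis e_i, i in Z, and actions x_{11} e_i = (1+γη q^{2i−1}) e_{i−1}, x_{22} e_i = e_{i+1}, x_{12} e_i = η q^i e_i, x_{21} e_i = γ q^i e_i) is a simple module. -/

import Mathlib

/-- `x₁₁ eᵢ = (1 + γη q^{2i−1}) e_{i−1}` on the space with basis `{eᵢ : i ∈ ℤ}`. -/
noncomputable def X11 (q γ η : ℂ) : Module.End ℂ (ℤ →₀ ℂ) :=
  Finsupp.lsum ℂ fun i : ℤ => (1 + γ * η * q ^ (2 * i - 1)) • Finsupp.lsingle (i - 1)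

/-- `x₂₂ eᵢ = e_{i+1}`. -/
noncomputable def X22 : Module.End ℂ (ℤ →₀ ℂ) :=
  Finsupp.lsum ℂ fun i : ℤ => Finsupp.lsingle (i + 1)

/-- `x₁₂ eᵢ = η qⁱ eᵢ`. -/
noncomputable def X12 (q η : ℂ) : Module.End ℂ (ℤ →₀ ℂ) :=
  Finsupp.lsum ℂ fun i : ℤ => (η * q ^ i) • Finsupp.lsingle i

/-- `x₂₁ eᵢ = γ qⁱ eᵢ`. -/
noncomputable def X21 (q γ : ℂ) : Module.End ℂ (ℤ →₀ ℂ) :=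
  Finsupp.lsum ℂ fun i : ℤ => (γ * q ^ i) • Finsupp.lsingle i

lemma X12_apply_coeff (q η : ℂ) (v : ℤ →₀ ℂ) (k : ℤ) : X12 q η v k = η * q ^ k * v k := by
  rw [X12, Finsupp.lsum_apply, Finsupp.sum_apply, Finsupp.sum]
  have : ∀ j ∈ v.support, ((η * q ^ j) • Finsupp.lsingle j : ℂ →ₗ[ℂ] (ℤ →₀ ℂ)) (v j) k
      = if j = k then η * q ^ k * v k else 0 := by
    intro j _
    rw [LinearMap.smul_apply, Finsupp.lsingle_apply, Finsupp.smul_single, Finsupp.single_apply]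
    split
    · subst ‹j = k›; rw [smul_eq_mul]
    · simp
  rw [Finset.sum_congr rfl this, Finset.sum_ite_eq' v.support k]
  split
  · rfl
  · rw [Finsupp.notMem_support_iff.mp ‹_›]; ring

lemma X11_single (q γ η : ℂ) (i : ℤ) (c : ℂ) :
    X11 q γ η (Finsupp.single i c) = (1 + γ * η * q ^ (2 * i - 1)) • Finsupp.single (i - 1) c := by
  rw [X11, Finsupp.lsum_single]; rfl

lemma X22_single (i : ℤ) (c : ℂ) : X22 (Finsupp.single i c) = Finsupp.single (i + 1) c := by
  rw [X22, Finsupp.lsum_single]; rfl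

theorem stmt7 (q γ η : ℂ) (hq0 : q ≠ 0) (hq : ∀ r : ℕ, 0 < r → q ^ r ≠ 1)
    (hγ : γ ≠ 0) (hη : η ≠ 0) (hγη : ∀ k : ℤ, γ * η ≠ -q ^ (2 * k + 1)) :
    ∀ U : Submodule ℂ (ℤ →₀ ℂ),
      (∀ v ∈ U, X11 q γ η v ∈ U) → (∀ v ∈ U, X12 q η v ∈ U) →
      (∀ v ∈ U, X21 q γ v ∈ U) → (∀ v ∈ U, X22 v ∈ U) →
      U = ⊥ ∨ U = ⊤ := by
  intro U h11 h12 _h21 h22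
  -- q^k = 1 only for k = 0
  have hzpow1 : ∀ k : ℤ, q ^ k = 1 → k = 0 := by
    rintro (n | n) h
    · cases n with
      | zero => rfl
      | succ m =>
        exact absurd (by rw [← zpow_natCast q (m + 1)]; exact_mod_cast h)
          (hq (m + 1) (Nat.succ_pos m))
    · exfalso
      rw [zpow_negSucc, inv_eq_one] at h
      exact hq (n + 1) (Nat.succ_pos n) h
  have hqinj : ∀ i j : ℤ, q ^ i = q ^ j → i = j := by
    intro i j h
    have : q ^ (i - j) = 1 := by
      rw [zpow_sub₀ hq0, h, div_self (zpow_ne_zero _ hq0)]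
    have := hzpow1 _ this
    omega
  -- the lowering coefficients are nonzero
  have hc : ∀ i : ℤ, 1 + γ * η * q ^ (2 * i - 1) ≠ 0 := by
    intro i h
    apply hγη (-i)
    rw [show 2 * (-i) + 1 = -(2 * i - 1) by ring, zpow_neg]
    have hz : q ^ (2 * i - 1) ≠ 0 := zpow_ne_zero _ hq0
    field_simp
    linear_combination h
  by_cases hbot : U = ⊥
  · exact Or.inl hbot
  right
  -- isolate a single basis vector
  have isolate : ∀ n : ℕ, ∀ v : ℤ →₀ ℂ, v.support.card ≤ n → v ∈ U →
      ∀ i ∈ v.support, Finsupp.single i (v i) ∈ U := by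
    intro n
    induction n with
    | zero =>
      intro v hcard hv i hi
      rw [Nat.le_zero, Finset.card_eq_zero] at hcard
      rw [hcard] at hi
      exact absurd hi (Finset.notMem_empty i)
    | succ n ih =>
      intro v hcard hv i hi
      by_cases hsub : v.support ⊆ {i}
      · have hvi : v = Finsupp.single i (v i) := by
          ext k
          by_cases hk : k = i
          · subst hk; rw [Finsupp.single_apply, if_pos rfl]
          · have hk' : k ∉ v.support := fun hk' => hk (Finset.mem_singleton.mp (hsub hk'))
            rw [Finsupp.notMem_support_iff.mp hk', Finsupp.single_apply,
              if_neg (fun h => hk h.symm)]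
        rw [← hvi]; exact hv
      · obtain ⟨j, hj, hji⟩ : ∃ j ∈ v.support, j ≠ i := by
          by_contra hcon
          push_neg at hcon
          exact hsub fun k hk => Finset.mem_singleton.mpr (hcon k hk)
        set w := X12 q η v - (η * q ^ j) • v with hw
        have hwU : w ∈ U := U.sub_mem (h12 v hv) (U.smul_mem _ hv)
        have hwk : ∀ k, w k = η * (q ^ k - q ^ j) * v k := by
          intro k
          rw [hw, Finsupp.sub_apply, Finsupp.smul_apply, X12_apply_coeff, smul_eq_mul]
          ring
        have hsupp : w.support ⊆ v.support.erase j := by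
          intro k hk
          rw [Finsupp.mem_support_iff] at hk
          refine Finset.mem_erase.mpr ⟨?_, Finsupp.mem_support_iff.mpr fun h0 => hk ?_⟩
          · rintro rfl; exact hk (by rw [hwk]; ring)
          · rw [hwk, h0, mul_zero]
        have hcard' : w.support.card ≤ n := by
          have h1 : w.support.card ≤ (v.support.erase j).card := Finset.card_le_card hsupp
          have h2 : (v.support.erase j).card = v.support.card - 1 :=
            Finset.card_erase_of_mem hj
          omega
        have hcne : η * (q ^ i - q ^ j) ≠ 0 :=
          mul_ne_zero hη (sub_ne_zero.mpr fun h => hji (hqinj j i h.symm))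
        have hiw : i ∈ w.support := by
          rw [Finsupp.mem_support_iff, hwk]
          exact mul_ne_zero hcne (Finsupp.mem_support_iff.mp hi)
        have hwU' := ih w hcard' hwU i hiw
        have heq : Finsupp.single i (v i) = (η * (q ^ i - q ^ j))⁻¹ • Finsupp.single i (w i) := by
          rw [hwk, Finsupp.smul_single, smul_eq_mul, ← mul_assoc, inv_mul_cancel₀ hcne, one_mul]
        rw [heq]; exact U.smul_mem _ hwU'
  -- get some single basis vector in U
  obtain ⟨v, hvU, hv0⟩ : ∃ v ∈ U, v ≠ 0 := by
    by_contra hcon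
    push_neg at hcon
    exact hbot (le_bot_iff.mp fun u hu => hcon u hu)
  obtain ⟨i₀, hi₀⟩ := Finsupp.support_nonempty_iff.mpr hv0
  have hsingle : Finsupp.single i₀ (v i₀) ∈ U :=
    isolate v.support.card v le_rfl hvU i₀ hi₀
  have hvi₀ : v i₀ ≠ 0 := Finsupp.mem_support_iff.mp hi₀
  have hone : Finsupp.single i₀ (1 : ℂ) ∈ U := by
    have : Finsupp.single i₀ (1 : ℂ) = (v i₀)⁻¹ • Finsupp.single i₀ (v i₀) := by
      rw [Finsupp.smul_single, smul_eq_mul, inv_mul_cancel₀ hvi₀]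
    rw [this]; exact U.smul_mem _ hsingle
  -- propagate to all basis vectors
  have hup : ∀ k : ℤ, Finsupp.single k (1 : ℂ) ∈ U → Finsupp.single (k + 1) (1 : ℂ) ∈ U := by
    intro k hk
    have := h22 _ hk
    rwa [X22_single] at this
  have hdown : ∀ k : ℤ, Finsupp.single k (1 : ℂ) ∈ U → Finsupp.single (k - 1) (1 : ℂ) ∈ U := by
    intro k hk
    have h1 := h11 _ hk
    rw [X11_single] at h1
    have : Finsupp.single (k - 1) (1 : ℂ)
        = (1 + γ * η * q ^ (2 * k - 1))⁻¹ •
          ((1 + γ * η * q ^ (2 * k - 1)) • Finsupp.single (k - 1) (1 : ℂ)) := by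
      rw [smul_smul, inv_mul_cancel₀ (hc k), one_smul]
    rw [this]; exact U.smul_mem _ h1
  have hall : ∀ k : ℤ, Finsupp.single k (1 : ℂ) ∈ U := by
    have key : ∀ t : ℤ, Finsupp.single (i₀ + t) (1 : ℂ) ∈ U := by
      intro t
      induction t using Int.induction_on with
      | zero => simpa using hone
      | succ n ihn =>
        have := hup _ ihn
        rwa [show i₀ + (n : ℤ) + 1 = i₀ + ((n : ℤ) + 1) by ring] at this
      | pred n ihn =>
        have := hdown _ ihn
        rwa [show i₀ + (-(n : ℤ)) - 1 = i₀ + (-(n : ℤ) - 1) by ring] at this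
    intro k
    have := key (k - i₀)
    rwa [show i₀ + (k - i₀) = k by ring] at this
  -- conclude U = ⊤
  rw [eq_top_iff]
  intro u _
  rw [← Finsupp.sum_single u]
  refine U.sum_mem fun j _ => ?_
  have : Finsupp.single j (u j) = (u j) • Finsupp.single j (1 : ℂ) := by
    rw [Finsupp.smul_single, smul_eq_mul, mul_one]
  rw [this]
  exact U.smul_mem _ (hall j)
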